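/- For 0 < m ≤ M with h = M/m, the Specht ratio and the Kantorovich constant satisfy S(h) ≤ (m+M)²/(4mM) ≤ S(h)², where S(h) = (h−1)h^{1/(h−1)}/(e log h) for h ≠ 1 and S(1) = 1. -/

import Mathlib

lemma two_mul_div_le_log {x : ℝ} (hx : 1 ≤ x) : 2 * (x - 1) / (x + 1) ≤ Real.log x := by
  set f : ℝ → ℝ := fun y => Real.log y + 4 * (y + 1)⁻¹ - 2 with hf
  have hderiv : ∀ y ∈ interior (Set.Ici (1:ℝ)), HasDerivAt f (y⁻¹ - 4 * ((y+1)^2)⁻¹) y := by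
    intro y hy
    rw [interior_Ici] at hy
    have hy0 : (0:ℝ) < y := lt_trans one_pos hy
    have h1 : HasDerivAt (fun y : ℝ => y + 1) 1 y := (hasDerivAt_id y).add_const 1
    have h2 : HasDerivAt (fun y : ℝ => (y + 1)⁻¹) (-1 / (y+1)^2) y := by
      simpa [Pi.inv_def] using h1.inv (by positivity)
    have h3 := (Real.hasDerivAt_log (ne_of_gt hy0)).add (h2.const_mul 4)
    have h4 := h3.sub_const 2
    refine h4.congr_deriv ?_
    ring
  have hmono : MonotoneOn f (Set.Ici (1:ℝ)) := by
    apply monotoneOn_of_deriv_nonneg (convex_Ici 1)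
    · apply ContinuousOn.sub (ContinuousOn.add _ _) continuousOn_const
      · exact Real.continuousOn_log.mono (by intro y hy; simp at hy ⊢; linarith)
      · exact (continuousOn_const.mul ((continuousOn_id.add continuousOn_const).inv₀
          (by intro y hy; simp at hy; exact ne_of_gt (by simp; linarith))))
    · intro y hy
      exact ((hderiv y hy).differentiableAt).differentiableWithinAt
    · intro y hy
      rw [(hderiv y hy).deriv]
      rw [interior_Ici] at hy
      have hy0 : (0:ℝ) < y := lt_trans one_pos hy
      rw [sub_nonneg]
      rw [show (4:ℝ) * ((y+1)^2)⁻¹ = 4 / (y+1)^2 by ring, show y⁻¹ = 1/y by ring,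
        div_le_div_iff₀ (by positivity) (by positivity)]
      nlinarith [sq_nonneg (y - 1)]
  have h01 := hmono (Set.self_mem_Ici) (by exact hx) hx
  have hf1 : f 1 = 0 := by simp [hf, Real.log_one]; norm_num
  rw [hf1] at h01
  have hx1 : (0:ℝ) < x + 1 := by linarith
  rw [div_le_iff₀ hx1]
  simp only [hf] at h01
  have h4 : 4 * (x+1)⁻¹ = 4 / (x+1) := by ring
  rw [h4, div_eq_mul_inv, mul_comm] at h01
  have hinv : (x+1) * (x+1)⁻¹ = 1 := mul_inv_cancel₀ (ne_of_gt hx1)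
  nlinarith [mul_le_mul_of_nonneg_left h01 (le_of_lt hx1)]

/-- The Specht ratio `S(h) = (h-1) h^{1/(h-1)} / (e log h)` for `h ≠ 1`, with `S(1) = 1`. -/
noncomputable def specht (h : ℝ) : ℝ :=
  if h = 1 then 1 else (h - 1) * h ^ (1 / (h - 1)) / (Real.exp 1 * Real.log h)

lemma specht_main {h : ℝ} (hh : 1 < h) :
    specht h ≤ (1 + h) ^ 2 / (4 * h) ∧ (1 + h) ^ 2 / (4 * h) ≤ specht h ^ 2 := by
  have hh0 : (0:ℝ) < h := by linarith
  have hh1 : (0:ℝ) < h - 1 := by linarith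
  set t := Real.log h with htdef
  have ht : 0 < t := Real.log_pos hh
  set u := t / (h - 1) with hudef
  have hu_pos : 0 < u := div_pos ht hh1
  have hu_le1 : u ≤ 1 := by
    rw [hudef, div_le_one hh1]
    exact Real.log_le_sub_one_of_pos hh0
  have hu' : u * (h - 1) = t := by
    rw [hudef]; field_simp
  have hulow : 2 / (h + 1) ≤ u := by
    rw [hudef, div_le_div_iff₀ (by linarith) hh1]
    have := two_mul_div_le_log (le_of_lt hh)
    rw [div_le_iff₀ (by linarith : (0:ℝ) < h + 1)] at this
    linarith
  have hS : specht h = Real.exp (u - 1) / u := by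
    rw [specht, if_neg hh.ne', Real.rpow_def_of_pos hh0]
    rw [show Real.log h * (1 / (h - 1)) = u by rw [hudef]; ring]
    rw [Real.exp_sub, ← htdef, ← hu']
    rw [div_eq_div_iff (by positivity) hu_pos.ne'] at *
    · field_simp
  have e1 : Real.exp (u - 1) * (2 - u) ≤ 1 := by
    calc Real.exp (u - 1) * (2 - u) ≤ Real.exp (u - 1) * Real.exp (1 - u) := by
          apply mul_le_mul_of_nonneg_left _ (le_of_lt (Real.exp_pos _))
          have := Real.add_one_le_exp (1 - u)
          linarith
      _ = 1 := by rw [← Real.exp_add]; norm_num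
  constructor
  · rw [hS, div_le_div_iff₀ hu_pos (by positivity)]
    have hvle : 2 / (h + 1) ≤ 1 := by
      rw [div_le_one (by linarith)]; linarith
    set v : ℝ := 2 / (h + 1) with hv
    have hveq : v * (h + 1) = 2 := by rw [hv]; field_simp
    have hq : 4 * h ≤ (1 + h) ^ 2 * (u * (2 - u)) := by
      nlinarith [mul_nonneg (by linarith : (0:ℝ) ≤ u - v) (by linarith : (0:ℝ) ≤ 2 - u - v),
        sq_nonneg (h + 1), hveq]
    calc Real.exp (u - 1) * (4 * h)
        ≤ Real.exp (u - 1) * ((1 + h) ^ 2 * (u * (2 - u))) := by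
          apply mul_le_mul_of_nonneg_left hq (le_of_lt (Real.exp_pos _))
      _ = ((1 + h) ^ 2 * u) * (Real.exp (u - 1) * (2 - u)) := by ring
      _ ≤ ((1 + h) ^ 2 * u) * 1 := by
          apply mul_le_mul_of_nonneg_left e1 (by positivity)
      _ = (1 + h) ^ 2 * u := by ring
  · set r := Real.exp (t / 2) with hrdef
    have hrpos : 0 < r := Real.exp_pos _
    have hr2 : r ^ 2 = h := by
      rw [hrdef, sq, ← Real.exp_add]
      rw [show t / 2 + t / 2 = t by ring, htdef, Real.exp_log hh0]
    have key : t + 2 * u ≤ 2 * r * Real.exp (u - 1) := by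
      have h1 := Real.add_one_le_exp (t / 2 + u - 1)
      have h2 : Real.exp (t / 2 + u - 1) = r * Real.exp (u - 1) := by
        rw [hrdef, ← Real.exp_add]; ring_nf
      rw [h2] at h1
      linarith
    have hid : u * (1 + h) = t + 2 * u := by linear_combination hu'
    have sqk : (1 + h) * u ≤ 2 * r * Real.exp (u - 1) := by
      rw [mul_comm, hid]; exact key
    rw [hS, div_pow, div_le_div_iff₀ (by positivity) (by positivity)]
    have hsq := mul_self_le_mul_self (by positivity : (0:ℝ) ≤ (1 + h) * u) sqk
    nlinarith [hsq, hr2, sq_nonneg (Real.exp (u - 1))]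

/-- For `0 < m ≤ M` with `h = M/m`, the Specht ratio and the Kantorovich constant
satisfy `S(h) ≤ (m+M)²/(4mM) ≤ S(h)²`. -/
theorem specht_le_kantorovich_le_specht_sq (m M : ℝ) (hm : 0 < m) (hmM : m ≤ M) :
    specht (M / m) ≤ (m + M) ^ 2 / (4 * m * M) ∧
      (m + M) ^ 2 / (4 * m * M) ≤ specht (M / m) ^ 2 := by
  have hM : 0 < M := lt_of_lt_of_le hm hmM
  rcases eq_or_lt_of_le hmM with heq | hlt
  · subst heq
    have h1 : m / m = 1 := div_self (ne_of_gt hm)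
    rw [h1]
    have hs : specht 1 = 1 := by simp [specht]
    rw [hs]
    have hK : (m + m) ^ 2 / (4 * m * m) = 1 := by
      field_simp; ring
    rw [hK]
    norm_num
  · have hh : 1 < M / m := (one_lt_div hm).mpr hlt
    have hKeq : (m + M) ^ 2 / (4 * m * M) = (1 + M / m) ^ 2 / (4 * (M / m)) := by
      field_simp
    rw [hKeq]
    exact specht_main hh
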